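/- arXiv:1003.2135 — 4 statements merged into one kernel-verified Lean document; each statement's English description precedes it below -/
import Mathlib

section
/- Let 𝔬 be a complete discrete valuation ring with fraction field F, let V be a finite-dimensional F-vector space, let T : V → V be an invertible linear transformation all of whose slopes are strictly positive, and let Λ be an 𝔬-lattice in V with TΛ ⊆ Λ. Then 1 − T maps Λ bijectively onto Λ. In particular, if v ∈ V satisfies v − Tv ∈ Λ, then v ∈ Λ. -/
open IsLocalRing

/-- If `T` is an invertible endomorphism of a finite-dimensional vector space
over the fraction field of a complete discrete valuation ring, all of whose
slopes are strictly positive (equivalently, all nonleading coefficients of the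
characteristic polynomial lie in the maximal ideal), and `Λ` is a lattice with
`TΛ ⊆ Λ`, then `1 − T` maps `Λ` bijectively onto `Λ`; in particular
`v − Tv ∈ Λ` implies `v ∈ Λ`. -/
theorem one_sub_bijOn_lattice
    (O : Type*) [CommRing O] [IsDomain O] [IsDiscreteValuationRing O]
    [IsAdicComplete (maximalIdeal O) O]
    (F : Type*) [Field F] [Algebra O F] [IsFractionRing O F]
    (V : Type*) [AddCommGroup V] [Module F V] [FiniteDimensional F V]
    [Module O V] [IsScalarTower O F V]
    (T : V →ₗ[F] V) (hT : Function.Bijective T)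
    (hslope : ∀ i < Module.finrank F V,
      (LinearMap.charpoly T).coeff i ∈ algebraMap O F '' (maximalIdeal O : Set O))
    (Λ : Submodule O V) (hfg : Λ.FG)
    (hfull : Submodule.span F (Λ : Set V) = ⊤)
    (hTΛ : ∀ x ∈ Λ, T x ∈ Λ) :
    Set.BijOn (⇑((1 : V →ₗ[F] V) - T)) (Λ : Set V) (Λ : Set V) ∧
    ∀ v : V, v - T v ∈ Λ → v ∈ Λ := by
  classical
  set n := Module.finrank F V with hn
  set p := LinearMap.charpoly T with hp_def
  have hinj : Function.Injective (algebraMap O F) := IsFractionRing.injective O F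
  have hmonic : p.Monic := LinearMap.charpoly_monic T
  have hdeg : p.natDegree = n := LinearMap.charpoly_natDegree T
  -- lift the characteristic polynomial to O
  have hlift : p ∈ Polynomial.lifts (algebraMap O F) := by
    rw [Polynomial.lifts_iff_coeff_lifts]
    intro i
    rcases lt_trichotomy i n with h | h | h
    · obtain ⟨a, _, ha⟩ := hslope i h
      exact ⟨a, ha⟩
    · refine ⟨1, ?_⟩
      have : p.coeff i = 1 := by
        rw [h, ← hdeg]; exact hmonic.coeff_natDegree
      rw [this, map_one]
    · refine ⟨0, ?_⟩
      rw [Polynomial.coeff_eq_zero_of_natDegree_lt (by omega), map_zero]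
  obtain ⟨P, hPmap, hPdeg, hPmonic⟩ :=
    Polynomial.lifts_and_degree_eq_and_monic hlift hmonic
  have hPnd : P.natDegree = n := by
    rw [← hdeg]; exact Polynomial.natDegree_eq_of_degree_eq hPdeg
  -- coefficients of P below n lie in the maximal ideal
  have hPm : ∀ i < n, P.coeff i ∈ maximalIdeal O := by
    intro i hi
    obtain ⟨a, ham, ha⟩ := hslope i hi
    have : algebraMap O F (P.coeff i) = algebraMap O F a := by
      rw [ha, ← hPmap, Polynomial.coeff_map]
    rwa [hinj this]
  -- P.eval 1 is a unit
  set u := P.eval 1 with hu_def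
  have hu : IsUnit u := by
    rw [← IsLocalRing.notMem_maximalIdeal]
    intro hmem
    have h1 : u - 1 ∈ maximalIdeal O := by
      have : u = ∑ i ∈ Finset.range (n + 1), P.coeff i := by
        rw [hu_def, Polynomial.eval_eq_sum_range, hPnd]
        simp
      have hc : P.coeff n = 1 := by rw [← hPnd]; exact hPmonic.coeff_natDegree
      rw [this, Finset.sum_range_succ, hc, add_sub_cancel_right]
      exact Submodule.sum_mem _ fun i hi => hPm i (Finset.mem_range.mp hi)
    have : (1 : O) ∈ maximalIdeal O := by
      have := Submodule.sub_mem _ hmem h1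
      simpa using this
    exact (IsLocalRing.maximalIdeal.isMaximal O).ne_top (Ideal.eq_top_iff_one _ |>.2 this)
  -- divide by X - 1 over O
  set G := P /ₘ (Polynomial.X - Polynomial.C 1) with hG_def
  have hdiv : Polynomial.C u + (Polynomial.X - Polynomial.C 1) * G = P := by
    have := Polynomial.modByMonic_add_div P (Polynomial.X - Polynomial.C (1 : O))
    rwa [Polynomial.modByMonic_X_sub_C_eq_C_eval] at this
  set g := G.map (algebraMap O F) with hg_def
  have hdivF : Polynomial.C (algebraMap O F u)
      + (Polynomial.X - Polynomial.C 1) * g = p := by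
    have := congrArg (Polynomial.map (algebraMap O F)) hdiv
    simpa [Polynomial.map_add, Polynomial.map_mul, Polynomial.map_sub] using
      this.trans hPmap
  set A := Polynomial.aeval T g with hA_def
  have hCH : (Polynomial.aeval T) p = 0 := LinearMap.aeval_self_charpoly T
  have hkey : (algebraMap O F u) • LinearMap.id (R := F) (M := V)
      + (T - 1) * A = 0 := by
    have := congrArg (Polynomial.aeval T) hdivF
    rw [hCH, map_add, map_mul, map_sub, Polynomial.aeval_X, map_one,
      Polynomial.aeval_C] at this
    rw [← this]
    congr 1
    ext v
    simp [Module.algebraMap_end_apply]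
    rfl
  have hmain : ∀ v : V, ((1 : V →ₗ[F] V) - T) (A v) = algebraMap O F u • v := by
    intro v
    have := congrArg (fun f : V →ₗ[F] V => f v) hkey
    simp only [LinearMap.add_apply, LinearMap.smul_apply, LinearMap.id_apply,
      Module.End.mul_apply, LinearMap.sub_apply, LinearMap.zero_apply,
      Module.End.one_apply] at this ⊢
    linear_combination (norm := abel) -this
  have hcomm : (T - 1) * A = A * (T - 1) := by
    have : ((Polynomial.X - Polynomial.C 1) * g : Polynomial F)
        = g * (Polynomial.X - Polynomial.C 1) := mul_comm _ _
    have h2 := congrArg (Polynomial.aeval T) this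
    rw [map_mul, map_mul, map_sub, Polynomial.aeval_X, Polynomial.aeval_C,
      map_one] at h2
    simpa using h2
  have hmain2 : ∀ v : V, A (((1 : V →ₗ[F] V) - T) v) = algebraMap O F u • v := by
    intro v
    have := congrArg (fun f : V →ₗ[F] V => f v) hkey
    rw [hcomm] at this
    simp only [LinearMap.add_apply, LinearMap.smul_apply, LinearMap.id_apply,
      Module.End.mul_apply, LinearMap.sub_apply, LinearMap.zero_apply,
      Module.End.one_apply] at this ⊢
    rw [map_sub] at this ⊢
    linear_combination (norm := abel) -this
  have hu0 : algebraMap O F u ≠ 0 := by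
    intro h
    have : u = 0 := hinj (by simpa using h)
    exact hu.ne_zero (by simpa using this)
  -- injectivity of 1 - T
  have hinj1T : Function.Injective (((1 : V →ₗ[F] V) - T)) := by
    intro a b hab
    have h1 := hmain2 a
    have h2 := hmain2 b
    rw [hab, h2] at h1
    exact smul_right_injective V hu0 h1.symm
  -- A maps Λ into Λ
  have hpow : ∀ (i : ℕ), ∀ x ∈ Λ, (T ^ i) x ∈ Λ := by
    intro i
    induction i with
    | zero => intro x hx; simpa using hx
    | succ k ih =>
      intro x hx
      rw [pow_succ, Module.End.mul_apply]
      exact ih _ (hTΛ x hx)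
  have hAΛ : ∀ x ∈ Λ, A x ∈ Λ := by
    intro x hx
    rw [hA_def, Polynomial.aeval_eq_sum_range]
    rw [LinearMap.sum_apply]
    refine Submodule.sum_mem _ fun i _ => ?_
    rw [LinearMap.smul_apply]
    have hc : g.coeff i = algebraMap O F (G.coeff i) := by
      rw [hg_def, Polynomial.coeff_map]
    rw [hc, algebraMap_smul]
    exact Λ.smul_mem _ (hpow i x hx)
  -- the inverse map
  set u' : O := ↑hu.unit⁻¹ with hu'_def
  have huu' : u' * u = 1 := hu.val_inv_mul
  have hSinv : ∀ x : V, ((1 : V →ₗ[F] V) - T) (u' • A x) = x := by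
    intro x
    have : ((1 : V →ₗ[F] V) - T) (u' • A x)
        = u' • (((1 : V →ₗ[F] V) - T) (A x)) := by
      rw [← algebraMap_smul (R := O) F, LinearMap.map_smul, algebraMap_smul]
    rw [this, hmain, ← algebraMap_smul (R := O) F, smul_smul, ← map_mul, huu',
      map_one, one_smul]
  have hMapsTo : Set.MapsTo (⇑((1 : V →ₗ[F] V) - T)) (Λ : Set V) (Λ : Set V) := by
    intro x hx
    simp only [LinearMap.sub_apply, Module.End.one_apply, SetLike.mem_coe] at hx ⊢
    exact Submodule.sub_mem _ hx (hTΛ x hx)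
  have hSurjOn : Set.SurjOn (⇑((1 : V →ₗ[F] V) - T)) (Λ : Set V) (Λ : Set V) := by
    intro y hy
    exact ⟨u' • A y, Λ.smul_mem _ (hAΛ y hy), hSinv y⟩
  refine ⟨⟨hMapsTo, fun a _ b _ hab => hinj1T hab, hSurjOn⟩, ?_⟩
  intro v hv
  have h1 : ((1 : V →ₗ[F] V) - T) v ∈ Λ := by
    simpa [LinearMap.sub_apply] using hv
  have h2 := hSinv (((1 : V →ₗ[F] V) - T) v)
  have h3 : v = u' • A (((1 : V →ₗ[F] V) - T) v) := hinj1T h2.symm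
  rw [h3]
  exact Λ.smul_mem _ (hAΛ _ h1)
end

section
/- Let 𝔬 be a complete discrete valuation ring with fraction field F and uniformizer ϖ, let Λ be a lattice in an n-dimensional F-vector space V, let i ∈ {1,...,n} and a ∈ ℤ. Then the subset {T ∈ End_F(V) : μ₁(T,Λ) + ... + μ_i(T,Λ) ≥ a} is both open and closed in End_F(V), and likewise the subset where μ₁(T,Λ) + ... + μ_i(T,Λ) = a is both open and closed. -/
open IsLocalRing

variable (O : Type*) [CommRing O] [IsDomain O] [IsDiscreteValuationRing O]
variable (F : Type*) [Field F] [Algebra O F] [IsFractionRing O F]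

/-- `x` and `y` differ by an element of `ϖ^a 𝔬 ⊆ F`. -/
def entryClose (ϖ : O) (a : ℤ) (x y : F) : Prop :=
  ∃ c : O, x - y = (algebraMap O F ϖ) ^ a * algebraMap O F c

variable (V : Type*) [AddCommGroup V] [Module F V] (n : ℕ)

/-- Openness of a subset of `End_F V` in the natural (`ϖ`-adic) topology,
expressed through matrix entries with respect to a basis `b`. -/
def AdicOpen (ϖ : O) (b : Module.Basis (Fin n) F V) (S : Set (V →ₗ[F] V)) : Prop :=
  ∀ T ∈ S, ∃ a : ℤ, ∀ T' : V →ₗ[F] V,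
    (∀ i j : Fin n, entryClose O F ϖ a (LinearMap.toMatrix b b T' i j)
      (LinearMap.toMatrix b b T i j)) → T' ∈ S

/-- The set of endomorphisms `T` with `μ₁(T,Λ)+⋯+μ_i(T,Λ) ≥ a`, where `Λ` is
the lattice spanned by the basis `b`: equivalently, every `i×i` minor of the
matrix of `T` in the basis `b` lies in `ϖ^a 𝔬`. -/
def HodgeSumGE (ϖ : O) (b : Module.Basis (Fin n) F V) (i : ℕ) (a : ℤ) :
    Set (V →ₗ[F] V) :=
  {T | ∀ ρ σ : Fin i → Fin n,
    ∃ c : O, ((LinearMap.toMatrix b b T).submatrix ρ σ).det =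
      (algebraMap O F ϖ) ^ a * algebraMap O F c}

section Aux

variable {O F}
variable (ϖ : O)

/-- `x ∈ ϖ^ℓ 𝔬 ⊆ F`. -/
def inPi (ℓ : ℤ) (x : F) : Prop :=
  ∃ c : O, x = (algebraMap O F ϖ) ^ ℓ * algebraMap O F c

lemma pi_ne_zero (hϖ : Irreducible ϖ) : algebraMap O F ϖ ≠ 0 := by
  intro h
  exact hϖ.ne_zero ((map_eq_zero_iff _ (IsFractionRing.injective O F)).mp h)

lemma inPi_zero (ℓ : ℤ) : inPi ϖ ℓ (0 : F) := ⟨0, by simp⟩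

lemma inPi_add {ℓ : ℤ} {x y : F} (hx : inPi ϖ ℓ x) (hy : inPi ϖ ℓ y) :
    inPi ϖ ℓ (x + y) := by
  obtain ⟨c, hc⟩ := hx; obtain ⟨d, hd⟩ := hy
  exact ⟨c + d, by rw [hc, hd, map_add]; ring⟩

lemma inPi_neg {ℓ : ℤ} {x : F} (hx : inPi ϖ ℓ x) : inPi ϖ ℓ (-x) := by
  obtain ⟨c, hc⟩ := hx
  exact ⟨-c, by rw [hc, map_neg]; ring⟩

lemma inPi_intCast_mul {ℓ : ℤ} (k : ℤ) {x : F} (hx : inPi ϖ ℓ x) :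
    inPi ϖ ℓ ((k : F) * x) := by
  obtain ⟨c, hc⟩ := hx
  refine ⟨(k : O) * c, ?_⟩
  rw [hc, map_mul, map_intCast]; ring

lemma inPi_mono (hϖ : Irreducible ϖ) {ℓ ℓ' : ℤ} (h : ℓ ≤ ℓ') {x : F}
    (hx : inPi ϖ ℓ' x) : inPi ϖ ℓ x := by
  obtain ⟨c, hc⟩ := hx
  refine ⟨ϖ ^ (ℓ' - ℓ).toNat * c, ?_⟩
  rw [hc, map_mul, map_pow]
  have h1 : (algebraMap O F ϖ) ^ ℓ' = (algebraMap O F ϖ) ^ ℓ *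
      (algebraMap O F ϖ) ^ (ℓ' - ℓ) := by
    rw [← zpow_add₀ (pi_ne_zero ϖ hϖ)]; ring_nf
  have h2 : (algebraMap O F ϖ) ^ (ℓ' - ℓ) =
      (algebraMap O F ϖ) ^ ((ℓ' - ℓ).toNat) := by
    rw [← zpow_natCast, Int.toNat_of_nonneg (by omega)]
  rw [h1, h2]; ring

lemma inPi_mul (hϖ : Irreducible ϖ) {ℓ k : ℤ} {x y : F}
    (hx : inPi ϖ ℓ x) (hy : inPi ϖ k y) : inPi ϖ (ℓ + k) (x * y) := by
  obtain ⟨c, hc⟩ := hx; obtain ⟨d, hd⟩ := hy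
  refine ⟨c * d, ?_⟩
  rw [hc, hd, map_mul, zpow_add₀ (pi_ne_zero ϖ hϖ)]; ring

lemma inPi_sum {ι : Type*} (s : Finset ι) (f : ι → F) (ℓ : ℤ)
    (h : ∀ j ∈ s, inPi ϖ ℓ (f j)) : inPi ϖ ℓ (∑ j ∈ s, f j) :=
  Finset.sum_induction f (inPi ϖ ℓ) (fun _ _ => inPi_add ϖ) (inPi_zero ϖ ℓ) h

lemma inPi_prod_const (hϖ : Irreducible ϖ) {ι : Type*} (s : Finset ι)
    (f : ι → F) (t : ℤ) (h : ∀ j ∈ s, inPi ϖ t (f j)) :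
    inPi ϖ ((s.card : ℤ) * t) (∏ j ∈ s, f j) := by
  induction s using Finset.cons_induction with
  | empty => simpa using ⟨1, by simp⟩
  | cons j s hj ih =>
      rw [Finset.prod_cons, Finset.card_cons]
      have h1 := inPi_mul ϖ hϖ (h j (Finset.mem_cons_self j s))
        (ih fun p hp => h p (Finset.mem_cons_of_mem hp))
      have : ((s.card + 1 : ℕ) : ℤ) * t = t + (s.card : ℤ) * t := by push_cast; ring
      rw [this]; exact h1

lemma inPi_prod_sub (hϖ : Irreducible ϖ) {ι : Type*} (s : Finset ι)
    (x y : ι → F) (m N : ℤ)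
    (hx : ∀ j ∈ s, inPi ϖ (-m) (x j)) (hy : ∀ j ∈ s, inPi ϖ (-m) (y j))
    (hd : ∀ j ∈ s, inPi ϖ N (x j - y j)) :
    inPi ϖ (N + m - (s.card : ℤ) * m) (∏ j ∈ s, x j - ∏ j ∈ s, y j) := by
  induction s using Finset.cons_induction with
  | empty => simpa using inPi_zero ϖ _
  | cons j s hj ih =>
      rw [Finset.prod_cons, Finset.prod_cons]
      have key : x j * ∏ p ∈ s, x p - y j * ∏ p ∈ s, y p =
          (x j - y j) * ∏ p ∈ s, x p +
          y j * (∏ p ∈ s, x p - ∏ p ∈ s, y p) := by ring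
      rw [key]
      have h1 : inPi ϖ (N + (s.card : ℤ) * (-m))
          ((x j - y j) * ∏ p ∈ s, x p) :=
        inPi_mul ϖ hϖ (hd j (Finset.mem_cons_self j s))
          (inPi_prod_const ϖ hϖ s x (-m)
            fun p hp => hx p (Finset.mem_cons_of_mem hp))
      have h2 : inPi ϖ (-m + (N + m - (s.card : ℤ) * m))
          (y j * (∏ p ∈ s, x p - ∏ p ∈ s, y p)) :=
        inPi_mul ϖ hϖ (hy j (Finset.mem_cons_self j s))
          (ih (fun p hp => hx p (Finset.mem_cons_of_mem hp))
              (fun p hp => hy p (Finset.mem_cons_of_mem hp))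
              (fun p hp => hd p (Finset.mem_cons_of_mem hp)))
      have e1 : N + (s.card : ℤ) * (-m) = N - (s.card : ℤ) * m := by ring
      have e2 : -m + (N + m - (s.card : ℤ) * m) = N - (s.card : ℤ) * m := by ring
      rw [e1] at h1; rw [e2] at h2
      have e3 : N + m - ((Finset.cons j s hj).card : ℤ) * m =
          N - (s.card : ℤ) * m := by
        rw [Finset.card_cons]; push_cast; ring
      rw [e3]
      exact inPi_add ϖ h1 h2

lemma inPi_det_sub (hϖ : Irreducible ϖ) {i : ℕ}
    (A A' : Matrix (Fin i) (Fin i) F) (m N : ℤ)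
    (hA : ∀ p q, inPi ϖ (-m) (A p q)) (hA' : ∀ p q, inPi ϖ (-m) (A' p q))
    (hd : ∀ p q, inPi ϖ N (A' p q - A p q)) :
    inPi ϖ (N + m - (i : ℤ) * m) (A'.det - A.det) := by
  rw [Matrix.det_apply, Matrix.det_apply, ← Finset.sum_sub_distrib]
  refine inPi_sum ϖ _ _ _ fun σ _ => ?_
  rw [← smul_sub, Units.smul_def, zsmul_eq_mul]
  refine inPi_intCast_mul ϖ _ ?_
  have := inPi_prod_sub ϖ hϖ Finset.univ (fun p => A' (σ p) p)
    (fun p => A (σ p) p) m N (fun p _ => hA' (σ p) p) (fun p _ => hA (σ p) p)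
    (fun p _ => hd (σ p) p)
  simpa using this

lemma exists_inPi_bound (hϖ : Irreducible ϖ) (x : F) :
    ∃ m : ℕ, inPi ϖ (-(m : ℤ)) x := by
  obtain ⟨r, s, hs, hrs⟩ := IsFractionRing.div_surjective (A := O) x
  have hs0 : s ≠ 0 := nonZeroDivisors.ne_zero hs
  obtain ⟨k, u, hu⟩ := IsDiscreteValuationRing.eq_unit_mul_pow_irreducible hs0 hϖ
  refine ⟨k, (↑u⁻¹ * r), ?_⟩
  have hs' : algebraMap O F s = algebraMap O F ↑u * (algebraMap O F ϖ) ^ k := by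
    rw [hu, map_mul, map_pow]
  have hsne : algebraMap O F s ≠ 0 := by
    simpa using (map_eq_zero_iff _ (IsFractionRing.injective O F)).not.mpr hs0
  have huu : algebraMap O F ↑u * algebraMap O F ↑u⁻¹ = 1 := by
    rw [← map_mul]; simp
  have hune : algebraMap O F ↑u ≠ 0 := by
    intro h; rw [h, zero_mul] at huu; exact zero_ne_one huu
  have hπ : algebraMap O F ϖ ≠ 0 := pi_ne_zero ϖ hϖ
  rw [← hrs, div_eq_iff hsne, hs', map_mul, zpow_neg, zpow_natCast]
  have key : ((algebraMap O F ϖ) ^ k)⁻¹ *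
      (algebraMap O F ↑u⁻¹ * algebraMap O F r) *
      (algebraMap O F ↑u * (algebraMap O F ϖ) ^ k) =
      algebraMap O F r * (algebraMap O F ↑u * algebraMap O F ↑u⁻¹) *
      ((algebraMap O F ϖ) ^ k * ((algebraMap O F ϖ) ^ k)⁻¹) := by ring
  rw [key, huu, mul_inv_cancel₀ (pow_ne_zero k hπ), mul_one, mul_one]

lemma exists_inPi_bound_family (hϖ : Irreducible ϖ) {ι : Type*} [Fintype ι]
    (f : ι → F) : ∃ m : ℕ, ∀ j, inPi ϖ (-(m : ℤ)) (f j) := by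
  choose g hg using fun j => exists_inPi_bound ϖ hϖ (f j)
  refine ⟨Finset.univ.sup g, fun j => inPi_mono ϖ hϖ ?_ (hg j)⟩
  have : g j ≤ Finset.univ.sup g := Finset.le_sup (Finset.mem_univ j)
  omega

end Aux

section Key

variable {O F V n}

lemma hodge_iff (ϖ : O) (hϖ : Irreducible ϖ) [Module O V] [IsScalarTower O F V]
    (b : Module.Basis (Fin n) F V) {i : ℕ} (T T' : V →ₗ[F] V) (m N : ℤ)
    (hm : ∀ p q, inPi ϖ (-m) (LinearMap.toMatrix b b T p q))
    (hNm : -m ≤ N)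
    (hd : ∀ p q, inPi ϖ N
      (LinearMap.toMatrix b b T' p q - LinearMap.toMatrix b b T p q))
    (ℓ : ℤ) (hℓ : ℓ ≤ N + m - (i : ℤ) * m) :
    T' ∈ HodgeSumGE O F V n ϖ b i ℓ ↔ T ∈ HodgeSumGE O F V n ϖ b i ℓ := by
  have hm' : ∀ p q, inPi ϖ (-m) (LinearMap.toMatrix b b T' p q) := by
    intro p q
    have h1 : LinearMap.toMatrix b b T' p q =
        (LinearMap.toMatrix b b T' p q - LinearMap.toMatrix b b T p q) +
        LinearMap.toMatrix b b T p q := by ring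
    rw [h1]
    exact inPi_add ϖ (inPi_mono ϖ hϖ hNm (hd p q)) (hm p q)
  have key : ∀ ρ σ : Fin i → Fin n, inPi ϖ ℓ
      (((LinearMap.toMatrix b b T').submatrix ρ σ).det -
       ((LinearMap.toMatrix b b T).submatrix ρ σ).det) := by
    intro ρ σ
    refine inPi_mono ϖ hϖ hℓ ?_
    exact inPi_det_sub ϖ hϖ _ _ m N (fun p q => hm (ρ p) (σ q))
      (fun p q => hm' (ρ p) (σ q)) (fun p q => hd (ρ p) (σ q))
  constructor
  · intro hT' ρ σ
    have h1 : ((LinearMap.toMatrix b b T).submatrix ρ σ).det =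
        ((LinearMap.toMatrix b b T').submatrix ρ σ).det +
        -(((LinearMap.toMatrix b b T').submatrix ρ σ).det -
          ((LinearMap.toMatrix b b T).submatrix ρ σ).det) := by ring
    rw [h1]
    exact inPi_add ϖ (hT' ρ σ) (inPi_neg ϖ (key ρ σ))
  · intro hT ρ σ
    have h1 : ((LinearMap.toMatrix b b T').submatrix ρ σ).det =
        ((LinearMap.toMatrix b b T).submatrix ρ σ).det +
        (((LinearMap.toMatrix b b T').submatrix ρ σ).det -
         ((LinearMap.toMatrix b b T).submatrix ρ σ).det) := by ring
    rw [h1]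
    exact inPi_add ϖ (hT ρ σ) (key ρ σ)

lemma key_open (ϖ : O) (hϖ : Irreducible ϖ) [Module O V] [IsScalarTower O F V]
    (b : Module.Basis (Fin n) F V) (i : ℕ) (a : ℤ) (T : V →ₗ[F] V) :
    ∃ N : ℤ, ∀ T' : V →ₗ[F] V,
      (∀ p q : Fin n, entryClose O F ϖ N (LinearMap.toMatrix b b T' p q)
        (LinearMap.toMatrix b b T p q)) →
      ∀ ℓ : ℤ, ℓ ≤ a →
        (T' ∈ HodgeSumGE O F V n ϖ b i ℓ ↔ T ∈ HodgeSumGE O F V n ϖ b i ℓ) := by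
  obtain ⟨m, hm⟩ := exists_inPi_bound_family ϖ hϖ
    (fun pq : Fin n × Fin n => LinearMap.toMatrix b b T pq.1 pq.2)
  refine ⟨max (a + (i : ℤ) * m - m) (-(m : ℤ)), fun T' hT' ℓ hℓ => ?_⟩
  refine hodge_iff ϖ hϖ b T T' m _ (fun p q => hm (p, q)) (le_max_right _ _)
    (fun p q => hT' p q) ℓ ?_
  have h1 : a + (i : ℤ) * m - m ≤ max (a + (i : ℤ) * m - m) (-(m : ℤ)) :=
    le_max_left _ _
  omega

end Key

/-- Openness lemma for Hodge points: the loci `μ₁+⋯+μ_i ≥ a` and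
`μ₁+⋯+μ_i = a` are open and closed in `End_F V`. -/
theorem hodge_loci_clopen [IsAdicComplete (maximalIdeal O) O]
    [Module O V] [IsScalarTower O F V] [FiniteDimensional F V]
    (ϖ : O) (hϖ : Irreducible ϖ) (b : Module.Basis (Fin n) F V)
    (Λ : Submodule O V) (hΛ : Λ = Submodule.span O (Set.range ⇑b))
    (i : ℕ) (hi1 : 1 ≤ i) (hin : i ≤ n) (a : ℤ) :
    AdicOpen O F V n ϖ b (HodgeSumGE O F V n ϖ b i a) ∧
    AdicOpen O F V n ϖ b (HodgeSumGE O F V n ϖ b i a)ᶜ ∧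
    AdicOpen O F V n ϖ b
      (HodgeSumGE O F V n ϖ b i a \ HodgeSumGE O F V n ϖ b i (a + 1)) ∧
    AdicOpen O F V n ϖ b
      (HodgeSumGE O F V n ϖ b i a \ HodgeSumGE O F V n ϖ b i (a + 1))ᶜ := by
  refine ⟨?_, ?_, ?_, ?_⟩
  · intro T hT
    obtain ⟨N, hN⟩ := key_open ϖ hϖ b i a T
    exact ⟨N, fun T' hT' => (hN T' hT' a le_rfl).mpr hT⟩
  · intro T hT
    obtain ⟨N, hN⟩ := key_open ϖ hϖ b i a T
    refine ⟨N, fun T' hT' hmem => hT ((hN T' hT' a le_rfl).mp hmem)⟩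
  · intro T hT
    obtain ⟨N, hN⟩ := key_open ϖ hϖ b i (a + 1) T
    refine ⟨N, fun T' hT' => ?_⟩
    have h1 := hN T' hT' a (by omega)
    have h2 := hN T' hT' (a + 1) le_rfl
    exact ⟨h1.mpr hT.1, fun hmem => hT.2 (h2.mp hmem)⟩
  · intro T hT
    obtain ⟨N, hN⟩ := key_open ϖ hϖ b i (a + 1) T
    refine ⟨N, fun T' hT' hmem => ?_⟩
    have h1 := hN T' hT' a (by omega)
    have h2 := hN T' hT' (a + 1) le_rfl
    exact hT ⟨h1.mp hmem.1, fun hc => hmem.2 (h2.mpr hc)⟩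
end

section
/- Let r : R → ℤ be a non-archimedean function on a root system R, and let α, β, γ ∈ R be three roots, one of which is the sum of the other two. Then: (1) α, β, γ are pairwise non-strongly-orthogonal; (2) r(α) + r(β) − r(γ) ≤ max{r(α), r(β), r(γ)}; (3) max{r(α), r(β), r(γ)} ≤ min{r_m(α), r_m(β), r_m(γ)}; (4) min{r_m(α), r_m(β), r_m(γ)} ≤ r_m(α) + r_m(β) − r_m(γ), where r_m(δ) = max{r(ε) : ε not strongly orthogonal to δ}. -/
variable {V : Type*} [NormedAddCommGroup V] [InnerProductSpace ℝ V] [DecidableEq V]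

/-- A (crystallographic) root system, encoded as a finite subset of a real inner
product space: it does not contain `0`, is symmetric, is stable under the
reflections in its elements, and satisfies the integrality condition. -/
def IsCrystRootSet (R : Finset V) : Prop :=
  (0 : V) ∉ R ∧ (∀ α ∈ R, -α ∈ R) ∧
  (∀ α ∈ R, ∀ β ∈ R, β - (2 * (inner ℝ β α : ℝ) / (inner ℝ α α : ℝ)) • α ∈ R) ∧
  (∀ α ∈ R, ∀ β ∈ R, ∃ z : ℤ, 2 * (inner ℝ β α : ℝ) = z * (inner ℝ α α : ℝ))

/-- Two roots are strongly orthogonal if neither their sum nor their difference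
lies in `R ∪ {0}`. -/
def StronglyOrthogonal (R : Finset V) (α β : V) : Prop :=
  α + β ∉ R ∧ α - β ∉ R ∧ α + β ≠ 0 ∧ α - β ≠ 0

instance (R : Finset V) (α β : V) : Decidable (StronglyOrthogonal R α β) :=
  inferInstanceAs (Decidable (α + β ∉ R ∧ α - β ∉ R ∧ α + β ≠ 0 ∧ α - β ≠ 0))

/-- `perp R S` is the set of roots strongly orthogonal to every root of `S`. -/
def perp (R : Finset V) (S : Finset V) : Finset V :=
  R.filter fun β => ∀ α ∈ S, StronglyOrthogonal R α β

/-- A function `r : R → ℤ` on a root system is non-archimedean if it is even and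
satisfies the ultrametric inequality. -/
def NonArch (R : Finset V) (r : V → ℤ) : Prop :=
  (∀ α ∈ R, r (-α) = r α) ∧
  ∀ α ∈ R, ∀ β ∈ R, α + β ∈ R → min (r α) (r β) ≤ r (α + β)

/-- `rm R r α` is the maximum of `r β` over the roots `β` not strongly
orthogonal to `α` (for `α ∈ R` this set contains `α` itself, so is nonempty). -/
def rm (R : Finset V) (r : V → ℤ) (α : V) : ℤ :=
  WithBot.unbotD (r α)
    (((R.filter fun β => ¬ StronglyOrthogonal R α β).image r).max)

/- ### Auxiliary lemmas -/

lemma TRL.inner_self_pos' {x : V} (hx : x ≠ 0) : (0:ℝ) < inner ℝ x x :=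
  lt_of_le_of_ne real_inner_self_nonneg (fun h => hx (inner_self_eq_zero.mp h.symm))

lemma TRL.mem_ne_zero {R : Finset V} (hR : IsCrystRootSet R) {x : V} (hx : x ∈ R) : x ≠ 0 :=
  fun h => hR.1 (h ▸ hx)

/-- Key root system fact: if ⟨β,α⟩ > 0 then β - α ∈ R ∪ {0}. -/
lemma TRL.sub_mem_of_inner_pos {R : Finset V} (hR : IsCrystRootSet R) {α β : V}
    (hα : α ∈ R) (hβ : β ∈ R) (h : (0:ℝ) < inner ℝ β α) : β - α ∈ R ∨ β = α := by
  obtain ⟨h0, hneg, hrefl, hint⟩ := hR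
  obtain ⟨n, hn⟩ := hint α hα β hβ
  obtain ⟨m, hm⟩ := hint β hβ α hα
  have ha : (0:ℝ) < inner ℝ α α := TRL.inner_self_pos' (fun h' => h0 (h' ▸ hα))
  have hb : (0:ℝ) < inner ℝ β β := TRL.inner_self_pos' (fun h' => h0 (h' ▸ hβ))
  have hcomm : (inner ℝ α β : ℝ) = inner ℝ β α := (real_inner_comm α β).symm
  rw [hcomm] at hm
  have hnR : (0:ℝ) < n := by nlinarith [hn]
  have hmR : (0:ℝ) < m := by nlinarith [hm]
  have hn0 : (0:ℤ) < n := by exact_mod_cast hnR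
  have hm0 : (0:ℤ) < m := by exact_mod_cast hmR
  have hcs : (inner ℝ β α : ℝ) * inner ℝ β α ≤ inner ℝ β β * inner ℝ α α := by
    have := real_inner_mul_inner_self_le β α
    linarith
  have hprod : ((n * m : ℤ) : ℝ) ≤ 4 := by
    push_cast
    nlinarith [hn, hm, hcs, mul_pos ha hb]
  have hnm : n * m ≤ 4 := by exact_mod_cast hprod
  by_cases hn1 : n = 1
  · left
    have hc : 2 * (inner ℝ β α : ℝ) / inner ℝ α α = 1 := by
      rw [hn, hn1]; push_cast; field_simp
    have := hrefl α hα β hβ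
    rwa [hc, one_smul] at this
  · by_cases hm1 : m = 1
    · left
      have hc : 2 * (inner ℝ α β : ℝ) / inner ℝ β β = 1 := by
        rw [hcomm, hm, hm1]; push_cast; field_simp
      have h2 := hrefl β hβ α hα
      rw [hc, one_smul] at h2
      have := hneg _ h2
      rwa [neg_sub] at this
    · right
      have h2n : 2 ≤ n := by omega
      have h2m : 2 ≤ m := by omega
      have hnn : 2 * n ≤ n * m := by nlinarith
      have hmm : 2 * m ≤ n * m := by nlinarith
      have hn2 : n = 2 := by omega
      have hm2 : m = 2 := by omega
      rw [hn2] at hn; rw [hm2] at hm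
      have hca : (inner ℝ β α : ℝ) = inner ℝ α α := by push_cast at hn; linarith
      have hcb : (inner ℝ β α : ℝ) = inner ℝ β β := by push_cast at hm; linarith
      have hz : (inner ℝ (β - α) (β - α) : ℝ) = 0 := by
        rw [real_inner_sub_sub_self]; linarith
      have := inner_self_eq_zero.mp hz
      exact sub_eq_zero.mp this

/-- Strong orthogonality implies orthogonality. -/
lemma TRL.inner_eq_zero_of_SO {R : Finset V} (hR : IsCrystRootSet R) {α β : V}
    (hα : α ∈ R) (hβ : β ∈ R) (h : StronglyOrthogonal R α β) : (inner ℝ β α : ℝ) = 0 := by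
  obtain ⟨hs, hd, hs0, hd0⟩ := h
  rcases lt_trichotomy (inner ℝ β α : ℝ) 0 with hlt | heq | hgt
  · exfalso
    have hpos : (0:ℝ) < inner ℝ (-β) α := by rw [inner_neg_left]; linarith
    rcases TRL.sub_mem_of_inner_pos hR hα (hR.2.1 β hβ) hpos with hmem | heq
    · have : α + β ∈ R := by
        have := hR.2.1 _ hmem
        rwa [show -(-β - α) = α + β by abel] at this
      exact hs this
    · exact hs0 (by rw [← heq]; abel)
  · exact heq
  · exfalso
    rcases TRL.sub_mem_of_inner_pos hR hα hβ hgt with hmem | heq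
    · have : α - β ∈ R := by
        have := hR.2.1 _ hmem
        rwa [neg_sub] at this
      exact hd this
    · exact hd0 (by rw [heq]; abel)

/-- If ε is strongly orthogonal to α and β, it is strongly orthogonal to α + β. -/
lemma TRL.SO_add {R : Finset V} (hR : IsCrystRootSet R) {α β ε : V}
    (hα : α ∈ R) (hβ : β ∈ R) (hγ : α + β ∈ R) (hε : ε ∈ R)
    (hSa : StronglyOrthogonal R α ε) (hSb : StronglyOrthogonal R β ε) :
    StronglyOrthogonal R (α + β) ε := by
  have hεα : (inner ℝ ε α : ℝ) = 0 := TRL.inner_eq_zero_of_SO hR hα hε hSa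
  have hεβ : (inner ℝ ε β : ℝ) = 0 := TRL.inner_eq_zero_of_SO hR hβ hε hSb
  have hγγ : (0:ℝ) < inner ℝ (α + β) (α + β) := TRL.inner_self_pos' (TRL.mem_ne_zero hR hγ)
  have hεγ : (inner ℝ ε (α + β) : ℝ) = 0 := by rw [inner_add_right, hεα, hεβ]; ring
  refine ⟨?_, ?_, ?_, ?_⟩
  · -- α + β + ε ∉ R
    intro hη
    set η := α + β + ε with hηdef
    have hsum : (inner ℝ η α : ℝ) + inner ℝ η β = inner ℝ (α+β) (α+β) := by
      rw [← inner_add_right, hηdef, inner_add_left, hεγ]; ring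
    rcases lt_or_ge (0:ℝ) (inner ℝ η α) with hpos | hle
    · rcases TRL.sub_mem_of_inner_pos hR hα hη hpos with hmem | heq
      · rw [show η - α = β + ε by rw [hηdef]; abel] at hmem
        exact hSb.1 hmem
      · have h0 : η - α = 0 := by rw [heq]; abel
        rw [show η - α = β + ε by rw [hηdef]; abel] at h0
        exact hSb.2.2.1 h0
    · have hpos : (0:ℝ) < inner ℝ η β := by nlinarith
      rcases TRL.sub_mem_of_inner_pos hR hβ hη hpos with hmem | heq
      · rw [show η - β = α + ε by rw [hηdef]; abel] at hmem
        exact hSa.1 hmem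
      · have h0 : η - β = 0 := by rw [heq]; abel
        rw [show η - β = α + ε by rw [hηdef]; abel] at h0
        exact hSa.2.2.1 h0
  · -- α + β - ε ∉ R
    intro hη
    set η := α + β - ε with hηdef
    have hsum : (inner ℝ η α : ℝ) + inner ℝ η β = inner ℝ (α+β) (α+β) := by
      rw [← inner_add_right, hηdef, inner_sub_left, hεγ]; ring
    rcases lt_or_ge (0:ℝ) (inner ℝ η α) with hpos | hle
    · rcases TRL.sub_mem_of_inner_pos hR hα hη hpos with hmem | heq
      · rw [show η - α = β - ε by rw [hηdef]; abel] at hmem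
        exact hSb.2.1 hmem
      · have h0 : η - α = 0 := by rw [heq]; abel
        rw [show η - α = β - ε by rw [hηdef]; abel] at h0
        exact hSb.2.2.2 h0
    · have hpos : (0:ℝ) < inner ℝ η β := by nlinarith
      rcases TRL.sub_mem_of_inner_pos hR hβ hη hpos with hmem | heq
      · rw [show η - β = α - ε by rw [hηdef]; abel] at hmem
        exact hSa.2.1 hmem
      · have h0 : η - β = 0 := by rw [heq]; abel
        rw [show η - β = α - ε by rw [hηdef]; abel] at h0
        exact hSa.2.2.2 h0
  · -- α + β + ε ≠ 0
    intro h
    have hε' : ε = -(α + β) := by rw [eq_neg_iff_add_eq_zero, ← h]; abel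
    rw [hε', inner_neg_left] at hεγ
    have : (inner ℝ (α+β) (α+β) : ℝ) = 0 := by linarith [neg_eq_zero.mp hεγ]
    exact (ne_of_gt hγγ) this
  · intro h
    have hε' : ε = α + β := (sub_eq_zero.mp h).symm
    rw [hε'] at hεγ
    exact (ne_of_gt hγγ) hεγ

lemma TRL.notSO_self {R : Finset V} {δ : V} : ¬ StronglyOrthogonal R δ δ :=
  fun h => h.2.2.2 (sub_self δ)

lemma TRL.SO_symm {R : Finset V} (hneg : ∀ a ∈ R, -a ∈ R) {α β : V}
    (h : StronglyOrthogonal R α β) : StronglyOrthogonal R β α := by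
  obtain ⟨h1, h2, h3, h4⟩ := h
  refine ⟨by rwa [add_comm], ?_, by rwa [add_comm], ?_⟩
  · intro hm
    exact h2 (by have := hneg _ hm; rwa [neg_sub] at this)
  · intro hz
    exact h4 (by rw [← neg_sub β α, hz, neg_zero])

lemma TRL.SO_neg_left {R : Finset V} (hneg : ∀ a ∈ R, -a ∈ R) {α β : V} :
    StronglyOrthogonal R (-α) β ↔ StronglyOrthogonal R α β := by
  have key : ∀ γ δ : V, StronglyOrthogonal R γ δ → StronglyOrthogonal R (-γ) δ := by
    intro γ δ ⟨h1, h2, h3, h4⟩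
    refine ⟨?_, ?_, ?_, ?_⟩
    · intro hm
      exact h2 (by have := hneg _ hm; rwa [show -(-γ + δ) = γ - δ by abel] at this)
    · intro hm
      exact h1 (by have := hneg _ hm; rwa [show -(-γ - δ) = γ + δ by abel] at this)
    · intro hz; exact h4 (by rw [← neg_eq_zero, show -(γ - δ) = -γ + δ by abel, hz])
    · intro hz; exact h3 (by rw [← neg_eq_zero, show -(γ + δ) = -γ - δ by abel, hz])
  constructor
  · intro h; have := key _ _ h; rwa [neg_neg] at this
  · exact key α β

/-- Lower bound for rm. -/
lemma TRL.le_rm {R : Finset V} (r : V → ℤ) {δ ε : V} (hε : ε ∈ R)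
    (hso : ¬ StronglyOrthogonal R δ ε) : r ε ≤ rm R r δ := by
  have hmem : ε ∈ R.filter fun β => ¬ StronglyOrthogonal R δ β :=
    Finset.mem_filter.mpr ⟨hε, hso⟩
  have himg : r ε ∈ (R.filter fun β => ¬ StronglyOrthogonal R δ β).image r :=
    Finset.mem_image_of_mem r hmem
  obtain ⟨b, hb⟩ := Finset.max_of_mem himg
  have := Finset.le_max himg
  rw [hb] at this
  rw [rm, hb, WithBot.unbotD_coe]
  exact_mod_cast this

/-- Upper bound for rm. -/
lemma TRL.rm_le {R : Finset V} (r : V → ℤ) {δ : V} (hδ : δ ∈ R) {M : ℤ}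
    (h : ∀ ε ∈ R, ¬ StronglyOrthogonal R δ ε → r ε ≤ M) : rm R r δ ≤ M := by
  have hmem : δ ∈ R.filter fun β => ¬ StronglyOrthogonal R δ β :=
    Finset.mem_filter.mpr ⟨hδ, TRL.notSO_self⟩
  have hne : ((R.filter fun β => ¬ StronglyOrthogonal R δ β).image r).Nonempty :=
    ⟨r δ, Finset.mem_image_of_mem r hmem⟩
  obtain ⟨b, hb⟩ := Finset.max_of_nonempty hne
  obtain ⟨ε, hεmem, hεr⟩ := Finset.mem_image.mp (Finset.mem_of_max hb)
  obtain ⟨hεR, hεso⟩ := Finset.mem_filter.mp hεmem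
  rw [rm, hb, WithBot.unbotD_coe, ← hεr]
  exact h ε hεR hεso

/-- rm is even. -/
lemma TRL.rm_neg {R : Finset V} (hneg : ∀ a ∈ R, -a ∈ R) (r : V → ℤ)
    (hrev : ∀ a ∈ R, r (-a) = r a) {δ : V} (hδ : δ ∈ R) :
    rm R r (-δ) = rm R r δ := by
  have hfil : (R.filter fun β => ¬ StronglyOrthogonal R (-δ) β)
      = R.filter fun β => ¬ StronglyOrthogonal R δ β := by
    apply Finset.filter_congr
    intro x _
    rw [TRL.SO_neg_left hneg]
  rw [rm, rm, hfil, hrev δ hδ]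

/-- rm subadditivity-type inequality. -/
lemma TRL.rm_add_le {R : Finset V} (hR : IsCrystRootSet R) (r : V → ℤ) {α β : V}
    (hα : α ∈ R) (hβ : β ∈ R) (hγ : α + β ∈ R) :
    rm R r (α + β) ≤ max (rm R r α) (rm R r β) := by
  apply TRL.rm_le r hγ
  intro ε hε hso
  by_cases hsa : StronglyOrthogonal R α ε
  · by_cases hsb : StronglyOrthogonal R β ε
    · exact absurd (TRL.SO_add hR hα hβ hγ hε hsa hsb) hso
    · exact le_trans (TRL.le_rm r hε hsb) (le_max_right _ _)
  · exact le_trans (TRL.le_rm r hε hsa) (le_max_left _ _)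

lemma TRL.notSO_of_add_mem {R : Finset V} {α β : V} (h : α + β ∈ R) :
    ¬ StronglyOrthogonal R α β := fun hso => hso.1 h

lemma TRL.notSO_of_sub_mem {R : Finset V} {α β : V} (h : α - β ∈ R) :
    ¬ StronglyOrthogonal R α β := fun hso => hso.2.1 h


/-- The three-root lemma for non-archimedean functions. -/
theorem three_root_lemma (R : Finset V) (hR : IsCrystRootSet R) (r : V → ℤ)
    (hna : NonArch R r) (α β γ : V) (hα : α ∈ R) (hβ : β ∈ R) (hγ : γ ∈ R)
    (hsum : γ = α + β ∨ α = β + γ ∨ β = α + γ) :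
    (¬ StronglyOrthogonal R α β ∧ ¬ StronglyOrthogonal R α γ ∧
      ¬ StronglyOrthogonal R β γ) ∧
    (r α + r β - r γ ≤ max (r α) (max (r β) (r γ))) ∧
    (max (r α) (max (r β) (r γ)) ≤ min (rm R r α) (min (rm R r β) (rm R r γ))) ∧
    (min (rm R r α) (min (rm R r β) (rm R r γ)) ≤ rm R r α + rm R r β - rm R r γ) := by
  have hneg := hR.2.1
  -- pairwise non strong orthogonality and the two key inequalities, by cases
  have key : (¬ StronglyOrthogonal R α β ∧ ¬ StronglyOrthogonal R α γ ∧
      ¬ StronglyOrthogonal R β γ) ∧ min (r α) (r β) ≤ r γ ∧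
      rm R r γ ≤ max (rm R r α) (rm R r β) := by
    rcases hsum with h | h | h
    · subst h
      refine ⟨⟨TRL.notSO_of_add_mem hγ, ?_, ?_⟩, hna.2 α hα β hβ hγ,
        TRL.rm_add_le hR r hα hβ hγ⟩
      · exact TRL.notSO_of_sub_mem (by rw [show α - (α+β) = -β by abel]; exact hneg β hβ)
      · exact TRL.notSO_of_sub_mem (by rw [show β - (α+β) = -α by abel]; exact hneg α hα)
    · -- α = β + γ, so γ = α + (-β)
      have hγ' : γ = α + -β := by rw [h]; abel
      have hmβ : -β ∈ R := hneg β hβ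
      have hsum' : α + -β ∈ R := by rw [← hγ']; exact hγ
      refine ⟨⟨?_, ?_, ?_⟩, ?_, ?_⟩
      · exact TRL.notSO_of_sub_mem (by rw [sub_eq_add_neg, ← hγ']; exact hγ)
      · exact TRL.notSO_of_sub_mem (by rw [show α - γ = β by rw [h]; abel]; exact hβ)
      · exact TRL.notSO_of_add_mem (by rw [← h]; exact hα)
      · have := hna.2 α hα (-β) hmβ hsum'
        rwa [hna.1 β hβ, ← hγ'] at this
      · have := TRL.rm_add_le hR r hα hmβ hsum'
        rwa [TRL.rm_neg hneg r hna.1 hβ, ← hγ'] at this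
    · -- β = α + γ, so γ = -α + β
      have hγ' : γ = -α + β := by rw [h]; abel
      have hmα : -α ∈ R := hneg α hα
      have hsum' : -α + β ∈ R := by rw [← hγ']; exact hγ
      refine ⟨⟨?_, ?_, ?_⟩, ?_, ?_⟩
      · exact TRL.notSO_of_sub_mem (by rw [show α - β = -γ by rw [h]; abel]; exact hneg γ hγ)
      · exact TRL.notSO_of_add_mem (by rw [← h]; exact hβ)
      · exact TRL.notSO_of_sub_mem (by rw [show β - γ = α by rw [h]; abel]; exact hα)
      · have := hna.2 (-α) hmα β hβ hsum'
        rwa [hna.1 α hα, ← hγ'] at this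
      · have := TRL.rm_add_le hR r hmα hβ hsum'
        rwa [TRL.rm_neg hneg r hna.1 hα, ← hγ'] at this
  obtain ⟨⟨nαβ, nαγ, nβγ⟩, h2, h4⟩ := key
  have nβα : ¬ StronglyOrthogonal R β α := fun h => nαβ (TRL.SO_symm hneg h)
  have nγα : ¬ StronglyOrthogonal R γ α := fun h => nαγ (TRL.SO_symm hneg h)
  have nγβ : ¬ StronglyOrthogonal R γ β := fun h => nβγ (TRL.SO_symm hneg h)
  have l11 : r α ≤ rm R r α := TRL.le_rm r hα TRL.notSO_self
  have l12 : r β ≤ rm R r α := TRL.le_rm r hβ nαβ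
  have l13 : r γ ≤ rm R r α := TRL.le_rm r hγ nαγ
  have l21 : r α ≤ rm R r β := TRL.le_rm r hα nβα
  have l22 : r β ≤ rm R r β := TRL.le_rm r hβ TRL.notSO_self
  have l23 : r γ ≤ rm R r β := TRL.le_rm r hγ nβγ
  have l31 : r α ≤ rm R r γ := TRL.le_rm r hα nγα
  have l32 : r β ≤ rm R r γ := TRL.le_rm r hβ nγβ
  have l33 : r γ ≤ rm R r γ := TRL.le_rm r hγ TRL.notSO_self
  exact ⟨⟨nαβ, nαγ, nβγ⟩, by omega, by omega, by omega⟩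
end

section
/- Let G be a split connected reductive group over the fraction field F of a complete discrete valuation ring 𝔬, with split maximal torus A, Borel B ⊇ A, and root system R. Let k : R → ℤ and consider the 𝔬-lattice 𝔨 = 𝔞(𝔬) ⊕ (⊕_{α∈R} ϖ^{k(α)} 𝔤_α(𝔬)) in 𝔤(F). Then 𝔨 is a Lie subalgebra of 𝔤(F) if and only if k is a concave function, i.e. k(α) + k(β) ≥ k(α+β) whenever α, β, α+β ∈ R, and k(α) + k(−α) ≥ 0 for all α ∈ R. -/
open IsLocalRing

theorem aux_zpow_le
    (O : Type*) [CommRing O] [IsDomain O]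
    (F : Type*) [Field F] [Algebra O F] [IsFractionRing O F]
    (ϖ : O) (hϖ : Irreducible ϖ) (u : O) (hu : IsUnit u) (m n : ℤ) (d : O)
    (h : algebraMap O F d * (algebraMap O F ϖ) ^ n
        = (algebraMap O F ϖ) ^ m * algebraMap O F u) : n ≤ m := by
  by_contra hc
  push_neg at hc
  have hinj := IsFractionRing.injective O F
  have hπ0 : (algebraMap O F ϖ) ≠ 0 := by
    simpa [map_eq_zero_iff _ hinj] using hϖ.ne_zero
  set t : ℕ := (n - m).toNat with ht
  have htpos : 0 < t := by omega
  have hnm : (t : ℤ) = n - m := Int.toNat_of_nonneg (by omega)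
  have key : algebraMap O F (d * ϖ ^ t) = algebraMap O F u := by
    have h1 : (algebraMap O F ϖ) ^ n = (algebraMap O F ϖ) ^ m * (algebraMap O F ϖ) ^ (t : ℤ) := by
      rw [← zpow_add₀ hπ0, hnm]; congr 1; omega
    rw [map_mul, map_pow, ← zpow_natCast (algebraMap O F ϖ) t]
    have := h
    rw [h1] at this
    have h2 : (algebraMap O F ϖ) ^ m * (algebraMap O F d * (algebraMap O F ϖ) ^ (t:ℤ))
        = (algebraMap O F ϖ) ^ m * algebraMap O F u := by
      rw [← this]; ring
    have h3 := mul_left_cancel₀ (zpow_ne_zero m hπ0) h2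
    exact h3
  have : d * ϖ ^ t = u := hinj key
  have hdvd : ϖ ∣ u := by
    refine ⟨d * ϖ ^ (t - 1), ?_⟩
    rw [← this]
    have : t = 1 + (t - 1) := by omega
    nth_rewrite 1 [this]
    ring
  exact hϖ.not_isUnit (isUnit_of_dvd_unit hdvd hu)

theorem mem_span_weighted
    (O : Type*) [CommRing O]
    (F : Type*) [Field F] [Algebra O F]
    (L : Type*) [AddCommGroup L] [Module F L] [Module O L] [IsScalarTower O F L]
    (S : Type*) [Fintype S] (b : Module.Basis S F L) (w : S → F) (x : L) :
    x ∈ Submodule.span O (Set.range fun s => w s • b s) ↔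
      ∀ s, ∃ c : O, b.repr x s = algebraMap O F c * w s := by
  constructor
  · intro hx
    induction hx using Submodule.span_induction with
    | mem y hy =>
      obtain ⟨t, rfl⟩ := hy
      intro s
      by_cases hst : t = s
      · subst hst
        exact ⟨1, by simp⟩
      · exact ⟨0, by simp [Module.Basis.repr_self, Finsupp.single_apply, hst]⟩
    | zero => intro s; exact ⟨0, by simp⟩
    | add y z hy hz ihy ihz =>
      intro s
      obtain ⟨c1, h1⟩ := ihy s
      obtain ⟨c2, h2⟩ := ihz s
      exact ⟨c1 + c2, by rw [map_add, Finsupp.add_apply, h1, h2, map_add]; ring⟩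
    | smul a y hy ih =>
      intro s
      obtain ⟨c, h⟩ := ih s
      refine ⟨a * c, ?_⟩
      have h4 : a • y = algebraMap O F a • y := (IsScalarTower.algebraMap_smul F a y).symm
      rw [h4, map_smul, Finsupp.smul_apply, smul_eq_mul, h, map_mul]; ring
  · intro h
    choose c hc using h
    have hx : x = ∑ s, b.repr x s • b s := (b.sum_repr x).symm
    rw [hx]
    refine Submodule.sum_mem _ fun s _ => ?_
    rw [hc s, mul_smul, IsScalarTower.algebraMap_smul F (c s)]
    exact Submodule.smul_mem _ _ (Submodule.subset_span ⟨s, rfl⟩)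
/-- Bruhat–Tits' criterion: for a split reductive Lie algebra
`𝔤(F) = 𝔞(F) ⊕ ⊕_{α∈R} 𝔤_α(F)` over the fraction field `F` of a complete
discrete valuation ring `𝔬` (encoded by a basis `b` of `L` consisting of a
basis of `𝔞` indexed by `ι` together with Chevalley root vectors indexed by
the roots, with the usual bracket relations), the `𝔬`-lattice
`𝔨 = 𝔞(𝔬) ⊕ ⊕_{α∈R} ϖ^{k(α)} 𝔤_α(𝔬)` is a Lie subalgebra of `𝔤(F)` if and
only if `k` is a concave function. -/
theorem lattice_subalgebra_iff_concave
    (O : Type*) [CommRing O] [IsDomain O] [IsDiscreteValuationRing O]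
    [IsAdicComplete (maximalIdeal O) O]
    (F : Type*) [Field F] [Algebra O F] [IsFractionRing O F]
    (ϖ : O) (hϖ : Irreducible ϖ)
    -- the root system, as a finite symmetric subset of an abelian group:
    (M : Type*) [AddCommGroup M] (R : Finset M) (h0R : (0 : M) ∉ R)
    (hsym : ∀ α ∈ R, -α ∈ R)
    -- the Lie algebra over `F`, with its root space decomposition given by a
    -- basis: `b (Sum.inl i)` is an `𝔬`-basis of `𝔞(𝔬)`, and `b (Sum.inr α)`
    -- is an `𝔬`-generator of the root space `𝔤_α(𝔬)`:
    (L : Type*) [LieRing L] [LieAlgebra F L]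
    [Module O L] [IsScalarTower O F L]
    (ι : Type*) [Fintype ι]
    (b : Module.Basis (ι ⊕ {α : M // α ∈ R}) F L)
    -- `𝔞` is abelian:
    (h_aa : ∀ i j : ι, ⁅b (Sum.inl i), b (Sum.inl j)⁆ = (0 : L))
    -- `[𝔞(𝔬), 𝔤_α(𝔬)] ⊆ 𝔤_α(𝔬)`:
    (h_ae : ∀ (i : ι) (α : {α : M // α ∈ R}), ∃ c : O,
      ⁅b (Sum.inl i), b (Sum.inr α)⁆ = algebraMap O F c • b (Sum.inr α))
    -- `[𝔤_α, 𝔤_β] = 𝔤_{α+β}` when `α + β ∈ R`, with unit structure constant: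
    (h_sum : ∀ α β : {α : M // α ∈ R}, ∀ h : (α : M) + (β : M) ∈ R, ∃ c : Oˣ,
      ⁅b (Sum.inr α), b (Sum.inr β)⁆ =
        algebraMap O F (c : O) • b (Sum.inr ⟨(α : M) + (β : M), h⟩))
    -- `[𝔤_α, 𝔤_{-α}] = 𝔬 H_α` with `H_α ∈ 𝔞(𝔬)` primitive:
    (h_opp : ∀ α β : {α : M // α ∈ R}, (α : M) + (β : M) = 0 → ∃ c : ι → O,
      ⁅b (Sum.inr α), b (Sum.inr β)⁆ =
        ∑ i : ι, algebraMap O F (c i) • b (Sum.inl i) ∧ ∃ i : ι, IsUnit (c i))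
    -- `[𝔤_α, 𝔤_β] = 0` when `α + β ∉ R ∪ {0}`:
    (h_zero : ∀ α β : {α : M // α ∈ R}, (α : M) + (β : M) ≠ 0 →
      (α : M) + (β : M) ∉ R → ⁅b (Sum.inr α), b (Sum.inr β)⁆ = (0 : L))
    (k : {α : M // α ∈ R} → ℤ) :
    (∀ x ∈ (Submodule.span O (Set.range fun i : ι => b (Sum.inl i)) ⊔
        ⨆ α : {α : M // α ∈ R}, Submodule.span O
          {((algebraMap O F ϖ) ^ (k α) : F) • b (Sum.inr α)} : Submodule O L),
      ∀ y ∈ (Submodule.span O (Set.range fun i : ι => b (Sum.inl i)) ⊔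
        ⨆ α : {α : M // α ∈ R}, Submodule.span O
          {((algebraMap O F ϖ) ^ (k α) : F) • b (Sum.inr α)} : Submodule O L),
        ⁅x, y⁆ ∈ (Submodule.span O (Set.range fun i : ι => b (Sum.inl i)) ⊔
        ⨆ α : {α : M // α ∈ R}, Submodule.span O
          {((algebraMap O F ϖ) ^ (k α) : F) • b (Sum.inr α)} : Submodule O L))
    ↔ ((∀ α β : {α : M // α ∈ R}, ∀ h : (α : M) + (β : M) ∈ R,
          k ⟨(α : M) + (β : M), h⟩ ≤ k α + k β) ∧
        (∀ α : {α : M // α ∈ R}, ∀ h : -(α : M) ∈ R,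
          0 ≤ k α + k ⟨-(α : M), h⟩)) := by
  classical
  have hinj := IsFractionRing.injective O F
  have hπ0 : (algebraMap O F ϖ) ≠ 0 := by
    simpa [map_eq_zero_iff _ hinj] using hϖ.ne_zero
  set W : Set L := Set.range fun s : ι ⊕ {α : M // α ∈ R} =>
    (Sum.elim (fun _ : ι => (1:F)) (fun α => (algebraMap O F ϖ) ^ (k α)) s) • b s with hW
  have hKw : (Submodule.span O (Set.range fun i : ι => b (Sum.inl i)) ⊔
        ⨆ α : {α : M // α ∈ R}, Submodule.span O
          {((algebraMap O F ϖ) ^ (k α) : F) • b (Sum.inr α)} : Submodule O L)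
      = Submodule.span O W := by
    have heq : W = (Set.range fun i : ι => b (Sum.inl i)) ∪
        (Set.range fun α : {α : M // α ∈ R} =>
          ((algebraMap O F ϖ) ^ (k α) : F) • b (Sum.inr α)) := by
      rw [hW]
      have h2 : (fun s : ι ⊕ {α : M // α ∈ R} =>
          (Sum.elim (fun _ : ι => (1:F)) (fun α => (algebraMap O F ϖ) ^ (k α)) s) • b s)
          = Sum.elim (fun i : ι => b (Sum.inl i))
              (fun α : {α : M // α ∈ R} =>
                ((algebraMap O F ϖ) ^ (k α) : F) • b (Sum.inr α)) := by
        funext s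
        cases s with
        | inl i => simp
        | inr α => simp
      rw [h2, Set.Sum.elim_range]
    rw [heq, Submodule.span_union,
      Submodule.span_range_eq_iSup (v := fun α : {α : M // α ∈ R} =>
        ((algebraMap O F ϖ) ^ (k α) : F) • b (Sum.inr α))]
  rw [hKw]
  have memK : ∀ x : L, x ∈ Submodule.span O W ↔
      ∀ s, ∃ c : O, b.repr x s = algebraMap O F c *
        (Sum.elim (fun _ : ι => (1:F)) (fun α => (algebraMap O F ϖ) ^ (k α)) s) := fun x => by
    rw [hW]; exact mem_span_weighted O F L _ b _ x
  have hgenW : ∀ s : ι ⊕ {α : M // α ∈ R},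
      (Sum.elim (fun _ : ι => (1:F)) (fun α => (algebraMap O F ϖ) ^ (k α)) s) • b s
        ∈ Submodule.span O W := by
    intro s
    refine Submodule.subset_span ?_
    rw [hW]
    exact ⟨s, rfl⟩
  have haK : ∀ i : ι, b (Sum.inl i) ∈ Submodule.span O W := by
    intro i
    have := hgenW (Sum.inl i)
    simpa using this
  have hvK : ∀ α : {α : M // α ∈ R},
      ((algebraMap O F ϖ) ^ (k α) : F) • b (Sum.inr α) ∈ Submodule.span O W := by
    intro α
    have := hgenW (Sum.inr α)
    simpa using this
  have lie_osmul : ∀ (t : O) (x y : L), ⁅x, t • y⁆ = t • ⁅x, y⁆ := by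
    intro t x y
    rw [← IsScalarTower.algebraMap_smul F t y, lie_smul, IsScalarTower.algebraMap_smul]
  have osmul_lie : ∀ (t : O) (x y : L), ⁅t • x, y⁆ = t • ⁅x, y⁆ := by
    intro t x y
    rw [← IsScalarTower.algebraMap_smul F t x, smul_lie, IsScalarTower.algebraMap_smul]
  constructor
  · intro hcl
    constructor
    · intro α β hab
      obtain ⟨c, hc⟩ := h_sum α β hab
      have hm := hcl _ (hvK α) _ (hvK β)
      have hbr : ⁅((algebraMap O F ϖ) ^ (k α) : F) • b (Sum.inr α),
          ((algebraMap O F ϖ) ^ (k β) : F) • b (Sum.inr β)⁆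
          = ((algebraMap O F ϖ) ^ (k α + k β) * algebraMap O F (c : O))
              • b (Sum.inr ⟨(α : M) + (β : M), hab⟩) := by
        rw [smul_lie, lie_smul, hc, smul_smul, smul_smul, ← zpow_add₀ hπ0]
      rw [hbr] at hm
      obtain ⟨d, hd⟩ := (memK _).1 hm (Sum.inr ⟨(α : M) + (β : M), hab⟩)
      have hrepr : b.repr (((algebraMap O F ϖ) ^ (k α + k β) * algebraMap O F (c : O))
            • b (Sum.inr ⟨(α : M) + (β : M), hab⟩)) (Sum.inr ⟨(α : M) + (β : M), hab⟩)
          = (algebraMap O F ϖ) ^ (k α + k β) * algebraMap O F (c : O) := by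
        simp
      rw [hrepr] at hd
      simp only [Sum.elim_inr] at hd
      exact aux_zpow_le O F ϖ hϖ (c : O) c.isUnit _ _ d hd.symm
    · intro α hna
      set β : {α : M // α ∈ R} := ⟨-(α : M), hna⟩ with hβ
      have h0 : (α : M) + (β : M) = 0 := by simp [hβ]
      obtain ⟨c, hceq, i0, hi0⟩ := h_opp α β h0
      have hm := hcl _ (hvK α) _ (hvK β)
      have hbr : ⁅((algebraMap O F ϖ) ^ (k α) : F) • b (Sum.inr α),
          ((algebraMap O F ϖ) ^ (k β) : F) • b (Sum.inr β)⁆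
          = ∑ i : ι, ((algebraMap O F ϖ) ^ (k α + k β) * algebraMap O F (c i))
              • b (Sum.inl i) := by
        rw [smul_lie, lie_smul, hceq, smul_smul, ← zpow_add₀ hπ0, Finset.smul_sum]
        exact Finset.sum_congr rfl fun i _ => by rw [smul_smul]
      rw [hbr] at hm
      obtain ⟨d, hd⟩ := (memK _).1 hm (Sum.inl i0)
      have hrepr : b.repr (∑ i : ι, ((algebraMap O F ϖ) ^ (k α + k β)
            * algebraMap O F (c i)) • b (Sum.inl i)) (Sum.inl i0)
          = (algebraMap O F ϖ) ^ (k α + k β) * algebraMap O F (c i0) := by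
        rw [map_sum, Finset.sum_apply']
        rw [Finset.sum_eq_single i0]
        · simp
        · intro j _ hj
          simp [Finsupp.single_apply, hj]
        · simp
      rw [hrepr] at hd
      simp only [Sum.elim_inl, mul_one] at hd
      have heq : algebraMap O F d * (algebraMap O F ϖ) ^ (0:ℤ)
          = (algebraMap O F ϖ) ^ (k α + k β) * algebraMap O F (c i0) := by
        rw [zpow_zero, mul_one, hd]
      exact aux_zpow_le O F ϖ hϖ (c i0) hi0 _ _ d heq
  · rintro ⟨h1, h2⟩ x hx y hy
    have hmix : ∀ (i : ι) (α0 : {α : M // α ∈ R}),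
        ⁅b (Sum.inl i), ((algebraMap O F ϖ) ^ (k α0) : F) • b (Sum.inr α0)⁆
          ∈ Submodule.span O W := by
      intro i α0
      obtain ⟨c, hc⟩ := h_ae i α0
      rw [lie_smul, hc, smul_comm, IsScalarTower.algebraMap_smul F c]
      exact Submodule.smul_mem _ c (hvK α0)
    have hgen : ∀ xw ∈ W, ∀ yw ∈ W, ⁅xw, yw⁆ ∈ Submodule.span O W := by
      intro xw hxw yw hyw
      rw [hW] at hxw hyw
      obtain ⟨s, rfl⟩ := hxw
      obtain ⟨t, rfl⟩ := hyw
      cases s with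
      | inl i =>
        cases t with
        | inl j =>
          simp only [Sum.elim_inl, one_smul]
          rw [h_aa i j]
          exact Submodule.zero_mem _
        | inr α0 =>
          simp only [Sum.elim_inl, Sum.elim_inr, one_smul]
          exact hmix i α0
      | inr α0 =>
        cases t with
        | inl i =>
          simp only [Sum.elim_inl, Sum.elim_inr, one_smul]
          rw [← lie_skew]
          exact Submodule.neg_mem _ (hmix i α0)
        | inr β0 =>
          simp only [Sum.elim_inr]
          rw [smul_lie, lie_smul, smul_smul, ← zpow_add₀ hπ0]
          by_cases h0 : (α0 : M) + (β0 : M) = 0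
          · obtain ⟨c, hceq, -, -⟩ := h_opp α0 β0 h0
            rw [hceq, Finset.smul_sum]
            have hbeq : β0 = ⟨-(α0 : M), by
                rw [← eq_neg_of_add_eq_zero_right h0]; exact β0.2⟩ :=
              Subtype.ext (eq_neg_of_add_eq_zero_right h0)
            have hs : 0 ≤ k α0 + k β0 := by rw [hbeq]; exact h2 α0 _
            refine Submodule.sum_mem _ fun i _ => ?_
            rw [smul_smul]
            have hsval : ((algebraMap O F ϖ) ^ (k α0 + k β0) : F) * algebraMap O F (c i)
                = algebraMap O F (ϖ ^ (k α0 + k β0).toNat * c i) := by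
              rw [map_mul, map_pow, ← zpow_natCast (algebraMap O F ϖ),
                Int.toNat_of_nonneg hs]
            rw [hsval, IsScalarTower.algebraMap_smul]
            exact Submodule.smul_mem _ _ (haK i)
          · by_cases hR : (α0 : M) + (β0 : M) ∈ R
            · obtain ⟨c, hc⟩ := h_sum α0 β0 hR
              rw [hc, smul_smul]
              have hs : k ⟨(α0 : M) + (β0 : M), hR⟩ ≤ k α0 + k β0 := h1 α0 β0 hR
              have key : (algebraMap O F ϖ) ^ (k α0 + k β0) * algebraMap O F (c : O)
                  = algebraMap O F ((c : O)
                      * ϖ ^ (k α0 + k β0 - k ⟨(α0 : M) + (β0 : M), hR⟩).toNat)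
                    * (algebraMap O F ϖ) ^ (k ⟨(α0 : M) + (β0 : M), hR⟩) := by
                rw [map_mul, map_pow, ← zpow_natCast (algebraMap O F ϖ)
                    (k α0 + k β0 - k ⟨(α0 : M) + (β0 : M), hR⟩).toNat,
                  Int.toNat_of_nonneg (by omega), mul_assoc, ← zpow_add₀ hπ0]
                rw [show k α0 + k β0 - k ⟨(α0 : M) + (β0 : M), hR⟩
                    + k ⟨(α0 : M) + (β0 : M), hR⟩ = k α0 + k β0 by omega]
                ring
              rw [key, mul_smul, IsScalarTower.algebraMap_smul]
              exact Submodule.smul_mem _ _ (hvK ⟨(α0 : M) + (β0 : M), hR⟩)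
            · rw [h_zero α0 β0 h0 hR, smul_zero]
              exact Submodule.zero_mem _
    refine Submodule.span_induction
      (p := fun x _ => ∀ y ∈ Submodule.span O W, ⁅x, y⁆ ∈ Submodule.span O W)
      ?_ ?_ ?_ ?_ hx y hy
    · intro xw hxw y' hy'
      refine Submodule.span_induction
        (p := fun y _ => ⁅xw, y⁆ ∈ Submodule.span O W) ?_ ?_ ?_ ?_ hy'
      · intro yw hyw; exact hgen xw hxw yw hyw
      · show ⁅xw, (0 : L)⁆ ∈ Submodule.span O W
        rw [lie_zero]; exact Submodule.zero_mem _
      · intro y1 y2 _ _ ih1 ih2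
        show ⁅xw, y1 + y2⁆ ∈ Submodule.span O W
        rw [lie_add]; exact Submodule.add_mem _ ih1 ih2
      · intro t y1 _ ih
        show ⁅xw, t • y1⁆ ∈ Submodule.span O W
        rw [lie_osmul]; exact Submodule.smul_mem _ t ih
    · intro y' hy'; rw [zero_lie]; exact Submodule.zero_mem _
    · intro x1 x2 _ _ ih1 ih2 y' hy'
      rw [add_lie]; exact Submodule.add_mem _ (ih1 y' hy') (ih2 y' hy')
    · intro t x1 _ ih y' hy'
      rw [osmul_lie]; exact Submodule.smul_mem _ t (ih y' hy')
end
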